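/- If n is a positive integer with n not congruent to 1 modulo 4, then there is no Baxter permutation of length n that is fixed under quarter-turn (90°) rotation of its permutation matrix. -/

import Mathlib

/-- The entry of the word `l` at (1-indexed) position `i`, i.e. `w(i)`. -/
def entry (l : List ℕ) (i : ℕ) : ℕ := l.getD (i - 1) 0

/-- `l` is the one-line notation of a permutation of `{1,…,n}`. -/
def IsPermWord (n : ℕ) (l : List ℕ) : Prop := l.Perm (List.range' 1 n)

/-- `l` is a Baxter permutation of length `n`: a permutation of `{1,…,n}`
avoiding the vincular patterns 3-14-2 and 2-41-3. -/
def IsBaxter (n : ℕ) (l : List ℕ) : Prop :=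
  IsPermWord n l ∧
  (¬ ∃ i j k, 1 ≤ i ∧ i < j ∧ j + 1 < k ∧ k ≤ n ∧
      entry l j < entry l k ∧ entry l k < entry l i ∧ entry l i < entry l (j + 1)) ∧
  (¬ ∃ i j k, 1 ≤ i ∧ i < j ∧ j + 1 < k ∧ k ≤ n ∧
      entry l (j + 1) < entry l i ∧ entry l i < entry l k ∧ entry l k < entry l j)

/-- `l` is fixed under quarter-turn (90°) rotation of its permutation matrix:
`w(w(i)) = n+1-i` for all `i ∈ {1,…,n}`. -/
def QuarterFixed (n : ℕ) (l : List ℕ) : Prop :=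
  ∀ i, 1 ≤ i → i ≤ n → entry l (entry l i) = n + 1 - i

/-- `l` is fixed under half-turn (180°) rotation of its permutation matrix:
`w(n+1-i) = n+1-w(i)` for all `i ∈ {1,…,n}`. -/
def HalfFixed (n : ℕ) (l : List ℕ) : Prop :=
  ∀ i, 1 ≤ i → i ≤ n → entry l (n + 1 - i) = n + 1 - entry l i

/-- The entry at position `i` is a left-to-right maximum. -/
def LRMaxAt (l : List ℕ) (i : ℕ) : Prop := ∀ k, 1 ≤ k → k < i → entry l k < entry l i

/-- The entry at position `i` is a right-to-left maximum. -/
def RLMaxAt (n : ℕ) (l : List ℕ) (i : ℕ) : Prop := ∀ k, i < k → k ≤ n → entry l k < entry l i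

/-- The entry at position `i` is a left-to-right minimum. -/
def LRMinAt (l : List ℕ) (i : ℕ) : Prop := ∀ k, 1 ≤ k → k < i → entry l i < entry l k

/-- The entry at position `i` is a right-to-left minimum. -/
def RLMinAt (n : ℕ) (l : List ℕ) (i : ℕ) : Prop := ∀ k, i < k → k ≤ n → entry l i < entry l k

/-- The (1-indexed) position of the value `v` in `l`, i.e. `w⁻¹(v)`. -/
def pos (l : List ℕ) (v : ℕ) : ℕ := l.idxOf v + 1

/-- The one-line notation of the inverse of the permutation `l` of `{1,…,n}`. -/
def invWord (n : ℕ) (l : List ℕ) : List ℕ := (List.range' 1 n).map (pos l)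

/-- The number of descents of a permutation word of length `n`:
indices `i ∈ {1,…,n-1}` with `w(i) > w(i+1)`. -/
noncomputable def des (n : ℕ) (l : List ℕ) : ℕ :=
  {i : ℕ | 1 ≤ i ∧ i + 1 ≤ n ∧ entry l (i + 1) < entry l i}.ncard

/-- Insert a new largest label `n+1` at (1-indexed) position `p`
in the permutation `l` of `{1,…,n}`. -/
def insertMax (n p : ℕ) (l : List ℕ) : List ℕ := l.insertIdx (p - 1) (n + 1)

/-- Insert a new smallest label `1` at (1-indexed) position `p`
(all old labels get increased by 1). -/
def insertMin (p : ℕ) (l : List ℕ) : List ℕ := (l.map (· + 1)).insertIdx (p - 1) 1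

/-- Append the value `j` at the end of the permutation `l`
(old labels `≥ j` get increased by 1). -/
def appendEnd (j : ℕ) (l : List ℕ) : List ℕ :=
  (l.map (fun x => if x < j then x else x + 1)) ++ [j]

/-- Standardize a word with distinct entries: replace the entries by `1,…,m` preserving
relative order (each entry is replaced by the number of entries less than or equal to it). -/
def standardize (l : List ℕ) : List ℕ := l.map (fun x => (l.filter (fun y => y ≤ x)).length)

lemma qtb_entry_mem {n : ℕ} {l : List ℕ} (hp : IsPermWord n l) {i : ℕ}
    (h1 : 1 ≤ i) (h2 : i ≤ n) : 1 ≤ entry l i ∧ entry l i ≤ n := by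
  have hlen : l.length = n := by
    have := hp.length_eq; simpa using this
  have hidx : i - 1 < l.length := by omega
  have hm : l.getD (i-1) 0 ∈ l := by
    rw [List.getD_eq_getElem l 0 hidx]; exact List.getElem_mem _
  have := (hp.mem_iff).1 hm
  rw [List.mem_range'_1] at this
  unfold entry; omega

def qtbPhi (n c : ℕ) (l : List ℕ) (i : ℕ) : ℕ :=
  if entry l i < c then entry l i else n + 1 - entry l i


/-- If `n` is a positive integer with `n % 4 ≠ 1`, there is no Baxter
permutation of length `n` fixed under quarter-turn rotation. -/
theorem no_quarter_turn_baxter_of_not_one_mod_four (n : ℕ) (hn : 0 < n) (h : n % 4 ≠ 1) :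
    ¬ ∃ l : List ℕ, IsBaxter n l ∧ QuarterFixed n l := by
  rintro ⟨l, ⟨hperm, hB1, hB2⟩, hq⟩
  have hmem : ∀ i, 1 ≤ i → i ≤ n → 1 ≤ entry l i ∧ entry l i ≤ n :=
    fun i h1 h2 => qtb_entry_mem hperm h1 h2
  have hhalf : ∀ i, 1 ≤ i → i ≤ n → entry l (n + 1 - i) = n + 1 - entry l i := by
    intro i h1 h2
    obtain ⟨a1, a2⟩ := hmem i h1 h2
    have q1 := hq i h1 h2
    have q2 := hq (entry l i) a1 a2
    rw [q1] at q2; exact q2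
  rcases Nat.even_or_odd n with he | ho
  · obtain ⟨m, hm⟩ := he
    have hm1 : (1:ℕ) ≤ m := by omega
    have hmn : m ≤ n := by omega
    have hm2 : (1:ℕ) ≤ m + 1 := by omega
    have hmn2 : m + 1 ≤ n := by omega
    obtain ⟨b1, b2⟩ := hmem m hm1 hmn
    obtain ⟨b1', b2'⟩ := hmem (m+1) hm2 hmn2
    have q1 := hq m hm1 hmn
    have q2 := hq (m+1) hm2 hmn2
    have hsum : entry l (m+1) = n + 1 - entry l m := by
      have hh := hhalf m hm1 hmn
      rw [show n+1-m = m+1 from by omega] at hh; exact hh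
    have hne : entry l m ≠ entry l (m+1) := by
      intro hEq; rw [hEq] at q1; omega
    rcases lt_or_gt_of_ne hne with hlt | hgt
    · -- ascent: pattern 3-14-2 with i = entry l m, j = m, k = entry l (m+1)
      have hBm : entry l m ≠ m := by
        intro hEq; rw [hEq] at q1; omega
      have hBm' : entry l m < m := by omega
      have hA : m + 1 < entry l (m+1) := by omega
      exact hB1 ⟨entry l m, m, entry l (m+1), b1, hBm', hA, b2',
        by rw [q2]; omega, by rw [q2, q1]; omega, by rw [q1]; omega⟩
    · -- descent: pattern 2-41-3 with i = entry l (m+1), j = m, k = entry l m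
      have hBm : entry l (m+1) ≠ m := by
        intro hEq; rw [hEq] at q2; omega
      have hBm' : entry l (m+1) < m := by omega
      have hA : m + 1 < entry l m := by omega
      exact hB2 ⟨entry l (m+1), m, entry l m, b1', hBm', hA, b2,
        by rw [q2]; omega, by rw [q2, q1]; omega, by rw [q1]; omega⟩
  · obtain ⟨t, ht⟩ := ho
    have hc1 : (1:ℕ) ≤ t + 1 := by omega
    have hcn : t + 1 ≤ n := by omega
    have hwc : entry l (t+1) = t + 1 := by
      obtain ⟨d1, d2⟩ := hmem (t+1) hc1 hcn
      have q1 := hq (t+1) hc1 hcn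
      have q2 := hq (entry l (t+1)) d1 d2
      rw [show n + 1 - (t+1) = t + 1 from by omega] at q1
      rw [q1] at q2
      omega
    have key : ∀ i ∈ Finset.Ico 1 (t+1),
        qtbPhi n (t+1) l i ∈ Finset.Ico 1 (t+1) ∧
        qtbPhi n (t+1) l (qtbPhi n (t+1) l i) = i ∧ qtbPhi n (t+1) l i ≠ i := by
      intro i hi
      rw [Finset.mem_Ico] at hi
      have hin : i ≤ n := by omega
      obtain ⟨e1, e2⟩ := hmem i hi.1 hin
      have q1 := hq i hi.1 hin
      have hneC : entry l i ≠ t + 1 := by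
        intro hEq; rw [hEq, hwc] at q1; omega
      by_cases hcase : entry l i < t + 1
      · have q2 := hq (entry l i) e1 e2
        have hφi : qtbPhi n (t+1) l i = entry l i := if_pos hcase
        have hgt : ¬ (entry l (entry l i) < t + 1) := by rw [q1]; omega
        refine ⟨?_, ?_, ?_⟩
        · rw [Finset.mem_Ico, hφi]; exact ⟨e1, hcase⟩
        · rw [hφi]; unfold qtbPhi; rw [if_neg hgt, q1]; omega
        · rw [hφi]; intro hEq; rw [hEq] at q1; omega
      · have hgtc : t + 1 < entry l i := by omega
        have hφi : qtbPhi n (t+1) l i = n + 1 - entry l i := if_neg hcase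
        have hhalfi := hhalf (entry l i) e1 e2
        rw [q1] at hhalfi
        have hval : entry l (n + 1 - entry l i) = i := by omega
        refine ⟨?_, ?_, ?_⟩
        · rw [Finset.mem_Ico, hφi]; omega
        · rw [hφi]; unfold qtbPhi; rw [hval, if_pos hi.2]
        · rw [hφi]; intro hEq; rw [hEq] at hval; omega
    set φ := qtbPhi n (t+1) l with hφdef
    set L := Finset.Ico 1 (t+1) with hL
    set S1 := L.filter (fun i => i < φ i) with hS1
    set S2 := L.filter (fun i => φ i < i) with hS2
    have hdisj : Disjoint S1 S2 := by
      rw [Finset.disjoint_left]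
      intro a ha hb
      rw [hS1, Finset.mem_filter] at ha
      rw [hS2, Finset.mem_filter] at hb
      omega
    have hunion : S1 ∪ S2 = L := by
      ext a
      simp only [hS1, hS2, Finset.mem_union, Finset.mem_filter]
      constructor
      · rintro (⟨h, _⟩ | ⟨h, _⟩) <;> exact h
      · intro ha
        have hk := key a ha
        rcases lt_trichotomy a (φ a) with hlt | heq | hgt
        · exact Or.inl ⟨ha, hlt⟩
        · exact absurd heq.symm hk.2.2
        · exact Or.inr ⟨ha, hgt⟩
    have hcard12 : S1.card = S2.card := by
      apply Finset.card_bij (fun a _ => φ a)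
      · intro a ha
        rw [hS1, Finset.mem_filter] at ha
        have hk := key a ha.1
        rw [hS2, Finset.mem_filter]
        exact ⟨hk.1, by rw [hk.2.1]; exact ha.2⟩
      · intro a1 ha1 a2 ha2 hEq
        rw [hS1, Finset.mem_filter] at ha1 ha2
        have h1 := (key a1 ha1.1).2.1
        have h2 := (key a2 ha2.1).2.1
        rw [← h1, ← h2, hEq]
      · intro b hb
        rw [hS2, Finset.mem_filter] at hb
        have hk := key b hb.1
        refine ⟨φ b, ?_, hk.2.1⟩
        rw [hS1, Finset.mem_filter]
        exact ⟨hk.1, by rw [hk.2.1]; exact hb.2⟩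
    have hLcard : L.card = t := by rw [hL, Nat.card_Ico]; omega
    have h2c : L.card = 2 * S1.card := by
      rw [← hunion, Finset.card_union_of_disjoint hdisj, hcard12]; ring
    omega
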